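/- Let J ⊆ {1,…,n−1} be nonempty and let (b_k)_{k∈J} be pairwise distinct reals in [a_n, a_0]. Set e_k = A(b_k) / ∏_{l∈J, l≠k}(b_k − b_l). Then the function λ ↦ A(λ)/∏_{k∈J}(λ−b_k) − ∑_{k∈J} e_k/(λ−b_k), defined on [a_n, a_0] ∖ {b_k : k∈J}, extends to a function B of class C^{n−1−#J} on [a_n, a_0] that satisfies (−1)^{#J+m} B^{(m)}(λ) < 0 for all λ ∈ [a_n, a_0] and all 0 ≤ m ≤ n−1−#J. -/

import Mathlib

open Set MeasureTheory intervalIntegral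

private lemma hpow2 (k : ℕ) : ((-1:ℝ))^(k+2) = (-1)^k := by
  rw [pow_succ, pow_succ]; ring

lemma seg_mem_Icc {a b c x t : ℝ} (hc : c ∈ Set.Icc a b) (hx : x ∈ Set.Icc a b)
    (ht : t ∈ Set.Icc (0:ℝ) 1) : c + t * (x - c) ∈ Set.Icc a b := by
  obtain ⟨ht0, ht1⟩ := ht
  constructor
  · have h1 : 0 ≤ (1 - t) * (c - a) := mul_nonneg (by linarith) (by linarith [hc.1])
    have h2 : 0 ≤ t * (x - a) := mul_nonneg ht0 (by linarith [hx.1])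
    nlinarith
  · have h1 : 0 ≤ (1 - t) * (b - c) := mul_nonneg (by linarith) (by linarith [hc.2])
    have h2 : 0 ≤ t * (b - x) := mul_nonneg ht0 (by linarith [hx.2])
    nlinarith

lemma seg_mem_Ioo {u v c x t : ℝ} (hc : c ∈ Set.Ioo u v) (hx : x ∈ Set.Ioo u v)
    (ht : t ∈ Set.Icc (0:ℝ) 1) : c + t * (x - c) ∈ Set.Ioo u v := by
  have h := seg_mem_Icc (a := min c x) (b := max c x)
    ⟨min_le_left _ _, le_max_left _ _⟩ ⟨min_le_right _ _, le_max_right _ _⟩ ht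
  exact ⟨lt_of_lt_of_le (lt_min hc.1 hx.1) h.1, lt_of_le_of_lt h.2 (max_lt hc.2 hx.2)⟩

/-- Invariant carried through the induction: all iterated derivatives up to order `R`
are continuous on `Ioo u v`, and successive ones are derivatives of each other. -/
def Nice (u v : ℝ) (R : ℕ) (f : ℝ → ℝ) : Prop :=
  (∀ m, m ≤ R → ContinuousOn (iteratedDeriv m f) (Set.Ioo u v)) ∧
  (∀ m, m < R → ∀ x ∈ Set.Ioo u v, HasDerivAt (iteratedDeriv m f) (iteratedDeriv (m + 1) f x) x)

lemma nice_of_contDiffOn {u v : ℝ} {R : ℕ} {f : ℝ → ℝ}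
    (hf : ContDiffOn ℝ R f (Set.Ioo u v)) : Nice u v R f := by
  have hO : IsOpen (Set.Ioo u v) := isOpen_Ioo
  have hU : UniqueDiffOn ℝ (Set.Ioo u v) := hO.uniqueDiffOn
  have heq : ∀ (m : ℕ),
      Set.EqOn (iteratedDerivWithin m f (Set.Ioo u v)) (iteratedDeriv m f) (Set.Ioo u v) := by
    intro m x hx
    rw [iteratedDerivWithin_eq_iteratedFDerivWithin, iteratedDeriv_eq_iteratedFDeriv,
      iteratedFDerivWithin_of_isOpen m hO hx]
  constructor
  · intro m hm
    exact (hf.continuousOn_iteratedDerivWithin (by exact_mod_cast hm) hU).congr (heq m).symm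
  · intro m hm x hx
    have hdiff : DifferentiableAt ℝ (iteratedDeriv m f) x := by
      have h1 := (hf.differentiableOn_iteratedDerivWithin (m := m)
        (by exact_mod_cast hm) hU) x hx
      have h2 : DifferentiableWithinAt ℝ (iteratedDeriv m f) (Set.Ioo u v) x :=
        h1.congr (fun y hy => (heq m hy).symm) ((heq m hx).symm)
      exact h2.differentiableAt (hO.mem_nhds hx)
    have h := hdiff.hasDerivAt
    rwa [← iteratedDeriv_succ] at h

lemma contOn_aux {u v c x : ℝ} {f : ℝ → ℝ} (hf : ContinuousOn f (Set.Ioo u v))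
    (hc : c ∈ Set.Ioo u v) (hx : x ∈ Set.Ioo u v) (j : ℕ) :
    ContinuousOn (fun t : ℝ => t ^ j * f (c + t * (x - c))) (Set.Icc 0 1) := by
  apply ContinuousOn.mul
  · exact (continuous_pow j).continuousOn
  · exact hf.comp (Continuous.continuousOn (by fun_prop)) (fun t ht => seg_mem_Ioo hc hx ht)

noncomputable def T (c : ℝ) (f : ℝ → ℝ) (x : ℝ) : ℝ :=
  ∫ t in (0:ℝ)..1, deriv f (c + t * (x - c))
lemma nice_T {u v : ℝ} {R : ℕ} {f : ℝ → ℝ} {c : ℝ} (hc : c ∈ Set.Ioo u v) (hR : 1 ≤ R)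
    (hf : Nice u v R f) :
    Nice u v (R - 1) (T c f) ∧
    (∀ m, m ≤ R - 1 → ∀ x ∈ Set.Ioo u v,
      iteratedDeriv m (T c f) x
        = ∫ t in (0:ℝ)..1, t ^ m * iteratedDeriv (m + 1) f (c + t * (x - c))) ∧
    (∀ x ∈ Set.Ioo u v, x ≠ c → T c f x = (f x - f c) / (x - c)) := by
  have hIoc : Set.uIoc (0:ℝ) 1 = Set.Ioc 0 1 := Set.uIoc_of_le zero_le_one
  -- measurability of the integrand
  have hmeas : ∀ (j p : ℕ), p ≤ R → ∀ x ∈ Set.Ioo u v, AEStronglyMeasurable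
      (fun t : ℝ => t ^ j * iteratedDeriv p f (c + t * (x - c)))
      (volume.restrict (Set.uIoc (0:ℝ) 1)) := by
    intro j p hp x hx
    rw [hIoc]
    exact ((contOn_aux (hf.1 p hp) hc hx j).mono Set.Ioc_subset_Icc_self).aestronglyMeasurable
      measurableSet_Ioc
  -- interval integrability of the integrand
  have hint : ∀ (j p : ℕ), p ≤ R → ∀ x ∈ Set.Ioo u v, IntervalIntegrable
      (fun t : ℝ => t ^ j * iteratedDeriv p f (c + t * (x - c))) volume 0 1 := by
    intro j p hp x hx
    apply ContinuousOn.intervalIntegrable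
    rw [Set.uIcc_of_le zero_le_one]
    exact contOn_aux (hf.1 p hp) hc hx j
  -- local uniform bound on the integrand
  have bnd : ∀ (p : ℕ), p ≤ R → ∀ x₀ ∈ Set.Ioo u v, ∃ ε > 0, ∃ C : ℝ,
      Metric.ball x₀ ε ⊆ Set.Ioo u v ∧
      ∀ x ∈ Metric.ball x₀ ε, ∀ t ∈ Set.Icc (0:ℝ) 1,
        c + t * (x - c) ∈ Set.Ioo u v ∧ ‖iteratedDeriv p f (c + t * (x - c))‖ ≤ C := by
    intro p hp x₀ hx₀
    obtain ⟨ε, hε, hball⟩ := Metric.isOpen_iff.1 isOpen_Ioo x₀ hx₀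
    refine ⟨ε/2, by positivity, ?_⟩
    have hsub : Metric.closedBall x₀ (ε/2) ⊆ Set.Ioo u v :=
      (Metric.closedBall_subset_ball (by linarith)).trans hball
    have ha : x₀ - ε/2 ∈ Set.Ioo u v := hsub (by
      rw [Metric.mem_closedBall, Real.dist_eq, show x₀ - ε/2 - x₀ = -(ε/2) by ring, abs_neg,
        abs_of_pos (by positivity)])
    have hbp : x₀ + ε/2 ∈ Set.Ioo u v := hsub (by
      rw [Metric.mem_closedBall, Real.dist_eq, show x₀ + ε/2 - x₀ = ε/2 by ring,
        abs_of_pos (by positivity)])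
    have hK : Set.Icc (min c (x₀ - ε/2)) (max c (x₀ + ε/2)) ⊆ Set.Ioo u v := fun y hy =>
      ⟨lt_of_lt_of_le (lt_min hc.1 ha.1) hy.1, lt_of_le_of_lt hy.2 (max_lt hc.2 hbp.2)⟩
    obtain ⟨C, hC⟩ := isCompact_Icc.exists_bound_of_continuousOn ((hf.1 p hp).mono hK)
    refine ⟨C, Metric.ball_subset_closedBall.trans hsub, fun x hx t ht => ?_⟩
    have hd := Metric.mem_ball.1 hx
    rw [Real.dist_eq] at hd
    have habs := abs_lt.1 hd
    have hxm : x ∈ Set.Icc (min c (x₀ - ε/2)) (max c (x₀ + ε/2)) :=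
      ⟨le_trans (min_le_right _ _) (by linarith [habs.1]),
        le_trans (by linarith [habs.2]) (le_max_right _ _)⟩
    have hmem := seg_mem_Icc ⟨min_le_left c _, le_max_left c _⟩ hxm ht
    exact ⟨hK hmem, hC _ hmem⟩
  -- differentiation under the integral sign
  have key : ∀ (m : ℕ), m + 2 ≤ R → ∀ x₀ ∈ Set.Ioo u v,
      HasDerivAt (fun x => ∫ t in (0:ℝ)..1, t ^ m * iteratedDeriv (m+1) f (c + t * (x - c)))
        (∫ t in (0:ℝ)..1, t ^ (m+1) * iteratedDeriv (m+2) f (c + t * (x₀ - c))) x₀ := by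
    intro m hm x₀ hx₀
    obtain ⟨ε, hε, C, hballO, hCb⟩ := bnd (m+2) hm x₀ hx₀
    have h := intervalIntegral.hasDerivAt_integral_of_dominated_loc_of_deriv_le
      (μ := volume) (a := (0:ℝ)) (b := 1)
      (F := fun x t => t ^ m * iteratedDeriv (m+1) f (c + t * (x - c)))
      (F' := fun x t => t ^ (m+1) * iteratedDeriv (m+2) f (c + t * (x - c)))
      (bound := fun _ => C) (x₀ := x₀) (Metric.ball_mem_nhds x₀ hε)
      ?_ ?_ ?_ ?_ ?_ ?_
    · exact h.2
    · exact Filter.eventually_of_mem (isOpen_Ioo.mem_nhds hx₀)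
        (fun x hx => hmeas m (m+1) (by omega) x hx)
    · exact hint m (m+1) (by omega) x₀ hx₀
    · exact hmeas (m+1) (m+2) hm x₀ hx₀
    · apply MeasureTheory.ae_of_all
      intro t ht x hx
      rw [hIoc] at ht
      have hb := (hCb x hx t ⟨ht.1.le, ht.2⟩).2
      calc ‖t ^ (m+1) * iteratedDeriv (m+2) f (c + t * (x - c))‖
          = |t| ^ (m+1) * ‖iteratedDeriv (m+2) f (c + t * (x - c))‖ := by
            rw [norm_mul, norm_pow, Real.norm_eq_abs]
        _ ≤ 1 * C := by
            apply mul_le_mul _ hb (norm_nonneg _) zero_le_one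
            apply pow_le_one₀ (abs_nonneg t)
            rw [abs_of_pos ht.1]; exact ht.2
        _ = C := one_mul C
    · exact intervalIntegrable_const
    · apply MeasureTheory.ae_of_all
      intro t ht x hx
      rw [hIoc] at ht
      have hpt : c + t * (x - c) ∈ Set.Ioo u v := (hCb x hx t ⟨ht.1.le, ht.2⟩).1
      have inner : HasDerivAt (fun y : ℝ => c + t * (y - c)) t x := by
        simpa using (((hasDerivAt_id x).sub_const c).const_mul t).const_add c
      have outer := hf.2 (m+1) (by omega) _ hpt
      have h2 := (outer.comp x inner).const_mul (t ^ m)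
      have h3 : HasDerivAt (fun y => t ^ m * iteratedDeriv (m+1) f (c + t * (y - c)))
          (t ^ m * (iteratedDeriv (m+2) f (c + t * (x - c)) * t)) x := h2
      refine h3.congr_deriv ?_
      ring
  -- continuity of the integral formulas
  have contPhi : ∀ (m : ℕ), m + 1 ≤ R → ContinuousOn
      (fun x => ∫ t in (0:ℝ)..1, t ^ m * iteratedDeriv (m+1) f (c + t * (x - c)))
      (Set.Ioo u v) := by
    intro m hm x₀ hx₀
    apply ContinuousAt.continuousWithinAt
    obtain ⟨ε, hε, C, hballO, hCb⟩ := bnd (m+1) hm x₀ hx₀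
    apply intervalIntegral.continuousAt_of_dominated_interval
      (bound := fun _ => C)
    · exact Filter.eventually_of_mem (isOpen_Ioo.mem_nhds hx₀)
        (fun x hx => hmeas m (m+1) hm x hx)
    · apply Filter.eventually_of_mem (Metric.ball_mem_nhds x₀ hε)
      intro x hx
      apply MeasureTheory.ae_of_all
      intro t ht
      rw [hIoc] at ht
      have hb := (hCb x hx t ⟨ht.1.le, ht.2⟩).2
      calc ‖t ^ m * iteratedDeriv (m+1) f (c + t * (x - c))‖
          = |t| ^ m * ‖iteratedDeriv (m+1) f (c + t * (x - c))‖ := by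
            rw [norm_mul, norm_pow, Real.norm_eq_abs]
        _ ≤ 1 * C := by
            apply mul_le_mul _ hb (norm_nonneg _) zero_le_one
            apply pow_le_one₀ (abs_nonneg t)
            rw [abs_of_pos ht.1]; exact ht.2
        _ = C := one_mul C
    · exact intervalIntegrable_const
    · apply MeasureTheory.ae_of_all
      intro t ht
      rw [hIoc] at ht
      have hpt : c + t * (x₀ - c) ∈ Set.Ioo u v :=
        seg_mem_Ioo hc hx₀ ⟨ht.1.le, ht.2⟩
      apply ContinuousAt.mul continuousAt_const
      have hinner : ContinuousAt (fun x : ℝ => c + t * (x - c)) x₀ := by fun_prop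
      exact (show ContinuousAt ((iteratedDeriv (m+1) f) ∘ (fun x : ℝ => c + t * (x - c))) x₀ from
        ContinuousAt.comp ((hf.1 (m+1) hm).continuousAt (isOpen_Ioo.mem_nhds hpt)) hinner)
  -- the explicit formula for the iterated derivatives of `T c f`
  have formula : ∀ (m : ℕ), m ≤ R - 1 → ∀ x ∈ Set.Ioo u v,
      iteratedDeriv m (T c f) x
        = ∫ t in (0:ℝ)..1, t ^ m * iteratedDeriv (m+1) f (c + t * (x - c)) := by
    intro m
    induction m with
    | zero =>
      intro _ x hx
      simp only [iteratedDeriv_zero, T, pow_zero, one_mul, zero_add, iteratedDeriv_one]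
    | succ m IH =>
      intro hm x hx
      have heq : iteratedDeriv m (T c f) =ᶠ[nhds x]
          (fun y => ∫ t in (0:ℝ)..1, t ^ m * iteratedDeriv (m+1) f (c + t * (y - c))) :=
        Filter.eventually_of_mem (isOpen_Ioo.mem_nhds hx)
          (fun y hy => IH (by omega) y hy)
      rw [iteratedDeriv_succ, heq.deriv_eq, (key m (by omega) x hx).deriv]
  -- slope formula
  have slope : ∀ x ∈ Set.Ioo u v, x ≠ c → T c f x = (f x - f c) / (x - c) := by
    intro x hx hxc
    have hxc' : x - c ≠ 0 := sub_ne_zero.2 hxc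
    have hderiv : ∀ t ∈ Set.uIcc (0:ℝ) 1, HasDerivAt (fun s => f (c + s * (x - c)))
        (deriv f (c + t * (x - c)) * (x - c)) t := by
      intro t ht
      rw [Set.uIcc_of_le zero_le_one] at ht
      have hpt : c + t * (x - c) ∈ Set.Ioo u v := seg_mem_Ioo hc hx ht
      have inner : HasDerivAt (fun s : ℝ => c + s * (x - c)) (x - c) t := by
        simpa using ((hasDerivAt_id t).mul_const (x - c)).const_add c
      have outer : HasDerivAt f (deriv f (c + t * (x - c))) (c + t * (x - c)) := by
        have h := hf.2 0 (by omega) _ hpt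
        simpa [iteratedDeriv_zero, iteratedDeriv_one] using h
      exact outer.comp t inner
    have hcont : IntervalIntegrable (fun t => deriv f (c + t * (x - c)) * (x - c))
        volume 0 1 := by
      apply ContinuousOn.intervalIntegrable
      rw [Set.uIcc_of_le zero_le_one]
      have h1 := (contOn_aux (hf.1 1 hR) hc hx 0).mul (continuousOn_const (c := x - c))
      simpa [iteratedDeriv_one, pow_zero, one_mul, Pi.mul_def] using h1
    have hFTC := intervalIntegral.integral_eq_sub_of_hasDerivAt hderiv hcont
    rw [intervalIntegral.integral_mul_const] at hFTC
    simp only [one_mul, zero_mul, add_zero] at hFTC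
    rw [show c + (x - c) = x from by ring] at hFTC
    rw [T, eq_div_iff hxc']
    exact hFTC
  refine ⟨⟨?_, ?_⟩, formula, slope⟩
  · intro m hm
    exact (contPhi m (by omega)).congr (fun x hx => formula m hm x hx)
  · intro m hm x hx
    have h1 := key m (by omega) x hx
    have heq : iteratedDeriv m (T c f) =ᶠ[nhds x]
        (fun y => ∫ t in (0:ℝ)..1, t ^ m * iteratedDeriv (m+1) f (c + t * (y - c))) :=
      Filter.eventually_of_mem (isOpen_Ioo.mem_nhds hx)
        (fun y hy => formula m (by omega) y hy)
    have h2 := h1.congr_of_eventuallyEq heq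
    rw [formula (m+1) (by omega) x hx]
    exact h2
lemma F_step {A : ℝ → ℝ} {b : ℕ → ℝ} {S : Finset ℕ} {j : ℕ} (hj : j ∉ S) {x : ℝ}
    (hx : ∀ k ∈ insert j S, x ≠ b k) (hjk : ∀ k ∈ S, b j ≠ b k) :
    A x / (∏ k ∈ insert j S, (x - b k)) -
        ∑ k ∈ insert j S, (A (b k) / ∏ l ∈ (insert j S).erase k, (b k - b l)) / (x - b k)
      = ((A x / (∏ k ∈ S, (x - b k)) -
            ∑ k ∈ S, (A (b k) / ∏ l ∈ S.erase k, (b k - b l)) / (x - b k))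
          - (A (b j) / (∏ k ∈ S, (b j - b k)) -
            ∑ k ∈ S, (A (b k) / ∏ l ∈ S.erase k, (b k - b l)) / (b j - b k))) / (x - b j) := by
  have hxj : x - b j ≠ 0 := sub_ne_zero.2 (hx j (Finset.mem_insert_self j S))
  have hxk : ∀ k ∈ S, x - b k ≠ 0 := fun k hk =>
    sub_ne_zero.2 (hx k (Finset.mem_insert_of_mem hk))
  have hjk' : ∀ k ∈ S, b j - b k ≠ 0 := fun k hk => sub_ne_zero.2 (hjk k hk)
  have hPx : (∏ k ∈ S, (x - b k)) ≠ 0 := Finset.prod_ne_zero_iff.2 (fun k hk => hxk k hk)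
  have hsum : ∑ k ∈ S, (A (b k) / ∏ l ∈ (insert j S).erase k, (b k - b l)) / (x - b k)
      = ∑ k ∈ S, ((A (b k) / ∏ l ∈ S.erase k, (b k - b l)) / (b k - b j)) / (x - b k) := by
    refine Finset.sum_congr rfl (fun k hk => ?_)
    have hkj : k ≠ j := fun h => hj (h ▸ hk)
    rw [Finset.erase_insert_of_ne (Ne.symm hkj),
      Finset.prod_insert (fun h => hj (Finset.mem_of_mem_erase h)),
      mul_comm (b k - b j) _, ← div_div]
  rw [Finset.prod_insert hj, Finset.sum_insert hj, Finset.erase_insert hj, hsum,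
    eq_div_iff hxj]
  have expand : (A x / ((x - b j) * ∏ k ∈ S, (x - b k)) -
      ((A (b j) / ∏ l ∈ S, (b j - b l)) / (x - b j) +
       ∑ k ∈ S, ((A (b k) / ∏ l ∈ S.erase k, (b k - b l)) / (b k - b j)) / (x - b k)))
        * (x - b j)
    = A x / (∏ k ∈ S, (x - b k)) - A (b j) / (∏ l ∈ S, (b j - b l))
      - ∑ k ∈ S, (((A (b k) / ∏ l ∈ S.erase k, (b k - b l)) / (x - b k))
                   - ((A (b k) / ∏ l ∈ S.erase k, (b k - b l)) / (b j - b k))) := by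
    rw [sub_mul, add_mul, Finset.sum_mul]
    have h1 : A x / ((x - b j) * ∏ k ∈ S, (x - b k)) * (x - b j)
        = A x / ∏ k ∈ S, (x - b k) := by
      field_simp
    have h2 : (A (b j) / ∏ l ∈ S, (b j - b l)) / (x - b j) * (x - b j)
        = A (b j) / ∏ l ∈ S, (b j - b l) := div_mul_cancel₀ _ hxj
    rw [h1, h2]
    have h3 : ∑ k ∈ S, ((A (b k) / ∏ l ∈ S.erase k, (b k - b l)) / (b k - b j)) / (x - b k)
          * (x - b j)
        = ∑ k ∈ S, (((A (b k) / ∏ l ∈ S.erase k, (b k - b l)) / (x - b k))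
                   - ((A (b k) / ∏ l ∈ S.erase k, (b k - b l)) / (b j - b k))) := by
      refine Finset.sum_congr rfl (fun k hk => ?_)
      have h4 := hxk k hk
      have h5 := hjk' k hk
      have h6 : b k - b j ≠ 0 := fun h => h5 (by linarith [sub_eq_zero.1 h])
      generalize (A (b k) / ∏ l ∈ S.erase k, (b k - b l)) = q
      field_simp
      ring
    rw [h3]
    ring
  rw [expand, Finset.sum_sub_distrib]
  ring

lemma contDiffOn_of_nice {u v : ℝ} {R : ℕ} {f : ℝ → ℝ} (hf : Nice u v R f) :
    ContDiffOn ℝ R f (Set.Ioo u v) := by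
  induction R generalizing f with
  | zero =>
    simp only [Nat.cast_zero, contDiffOn_zero]
    simpa [iteratedDeriv_zero] using hf.1 0 le_rfl
  | succ R IH =>
    rw [show ((R + 1 : ℕ) : WithTop ℕ∞) = (R : WithTop ℕ∞) + 1 by push_cast; rfl,
      contDiffOn_succ_iff_deriv_of_isOpen isOpen_Ioo]
    refine ⟨?_, ?_, IH ⟨?_, ?_⟩⟩
    · intro x hx
      have h := hf.2 0 (by omega) x hx
      simp only [iteratedDeriv_zero] at h
      exact h.differentiableAt.differentiableWithinAt
    · intro h
      simp at h
    · intro m hm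
      have h := hf.1 (m+1) (by omega)
      rwa [iteratedDeriv_succ'] at h
    · intro m hm x hx
      have h := hf.2 (m+1) (by omega) x hx
      rw [← iteratedDeriv_succ', ← iteratedDeriv_succ']
      exact h

lemma idw_eq_of_nice {u v an a0 : ℝ} {R : ℕ} {f : ℝ → ℝ} (h01 : an < a0)
    (hsub : Set.Icc an a0 ⊆ Set.Ioo u v) (hf : Nice u v R f) :
    ∀ m, m ≤ R → ∀ x ∈ Set.Icc an a0,
      iteratedDerivWithin m f (Set.Icc an a0) x = iteratedDeriv m f x := by
  intro m
  induction m with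
  | zero => intro _ x _; simp [iteratedDerivWithin_zero, iteratedDeriv_zero]
  | succ m IH =>
    intro hm x hx
    have hud := uniqueDiffOn_Icc h01
    rw [iteratedDerivWithin_succ,
      derivWithin_congr (fun y hy => IH (by omega) y hy) (IH (by omega) x hx),
      (hf.2 m (by omega) x (hsub hx)).differentiableAt.derivWithin (hud x hx),
      iteratedDeriv_succ]

/-- Lemma 4.3.  For a nonempty `J ⊆ {1,…,n−1}` and pairwise
distinct points `b_k ∈ [a_n, a_0]` (`k ∈ J`), the function
`λ ↦ A(λ)/∏_{k∈J}(λ−b_k) − ∑_{k∈J} e_k/(λ−b_k)` (with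
`e_k = A(b_k)/∏_{l∈J,l≠k}(b_k−b_l)`) extends to a `C^{n−1−#J}` function `B` on
`[a_n, a_0]` satisfying `(−1)^{#J+m} B^{(m)}(λ) < 0` for `0 ≤ m ≤ n−1−#J`. -/
theorem stmt_4 (n : ℕ) (hn : 3 ≤ n) (an a0 : ℝ) (h0 : 0 < an) (h1 : an < a0)
    -- condition (∗) for `A`
    (A : ℝ → ℝ) (u v : ℝ) (hu : u < an) (hv : a0 < v)
    (hA : ContDiffOn ℝ (↑(n - 1)) A (Set.Ioo u v))
    (hApos : ∀ x ∈ Set.Icc an a0, 0 < A x)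
    (hAd : ∀ k, 1 ≤ k → k ≤ n - 1 → ∀ x ∈ Set.Icc an a0,
      0 < (-1 : ℝ) ^ (k - 1) * iteratedDeriv k A x)
    (J : Finset ℕ) (hJ : J ⊆ Finset.Icc 1 (n - 1)) (hJne : J.Nonempty)
    (b : ℕ → ℝ) (hbmem : ∀ k ∈ J, b k ∈ Set.Icc an a0)
    (hbdist : ∀ k ∈ J, ∀ l ∈ J, k ≠ l → b k ≠ b l) :
    ∃ B : ℝ → ℝ,
      (∀ x ∈ Set.Icc an a0, (∀ k ∈ J, x ≠ b k) →
        B x = A x / (∏ k ∈ J, (x - b k)) -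
          ∑ k ∈ J, (A (b k) / ∏ l ∈ J.erase k, (b k - b l)) / (x - b k)) ∧
      ContDiffOn ℝ (↑(n - 1 - J.card)) B (Set.Icc an a0) ∧
      ∀ m, m ≤ n - 1 - J.card → ∀ x ∈ Set.Icc an a0,
        (-1 : ℝ) ^ (J.card + m) * iteratedDerivWithin m B (Set.Icc an a0) x < 0 := by
  classical
  have hIcc : Set.Icc an a0 ⊆ Set.Ioo u v := fun y hy =>
    ⟨lt_of_lt_of_le hu hy.1, lt_of_le_of_lt hy.2 hv⟩
  have hJcard : J.card ≤ n - 1 := by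
    have h := Finset.card_le_card hJ
    simpa [Nat.card_Icc] using h
  have main : ∀ S : Finset ℕ, S ⊆ J → ∃ g : ℝ → ℝ, Nice u v (n - 1 - S.card) g ∧
      (∀ x ∈ Set.Ioo u v, (∀ k ∈ S, x ≠ b k) →
        g x = A x / (∏ k ∈ S, (x - b k)) -
          ∑ k ∈ S, (A (b k) / ∏ l ∈ S.erase k, (b k - b l)) / (x - b k)) ∧
      (∀ m, 1 ≤ S.card + m → m ≤ n - 1 - S.card → ∀ x ∈ Set.Icc an a0,
        0 < (-1:ℝ)^(S.card + m + 1) * iteratedDeriv m g x) := by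
    intro S
    induction S using Finset.induction_on with
    | empty =>
      intro _
      refine ⟨A, by simpa using nice_of_contDiffOn hA, ?_, ?_⟩
      · intro x _ _
        simp
      · intro m hm1 hm2 x hx
        simp only [Finset.card_empty, zero_add] at hm1 hm2 ⊢
        obtain ⟨m', rfl⟩ : ∃ m', m = m' + 1 := ⟨m - 1, by omega⟩
        have h := hAd (m' + 1) (by omega) (by simpa using hm2) x hx
        rw [show m' + 1 + 1 = m' + 2 from rfl, hpow2]
        simpa using h
    | @insert j S hj IH =>
      intro hins
      have hSJ : S ⊆ J := (Finset.subset_insert j S).trans hins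
      obtain ⟨g, hgN, hgF, hgP⟩ := IH hSJ
      have hjJ : j ∈ J := hins (Finset.mem_insert_self j S)
      have hbjI : b j ∈ Set.Icc an a0 := hbmem j hjJ
      have hbjO : b j ∈ Set.Ioo u v := hIcc hbjI
      have hcard : (insert j S).card = S.card + 1 := Finset.card_insert_of_notMem hj
      have hcard2 : S.card + 1 ≤ n - 1 := by
        rw [← hcard]
        exact le_trans (Finset.card_le_card hins) hJcard
      have hR1 : 1 ≤ n - 1 - S.card := by omega
      have hcard3 : n - 1 - (insert j S).card = n - 1 - S.card - 1 := by
        rw [hcard]; omega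
      obtain ⟨hN, hForm, hSlope⟩ := nice_T hbjO hR1 hgN
      have hjne : ∀ k ∈ S, b j ≠ b k := fun k hk =>
        hbdist j hjJ k (hSJ hk) (fun h => hj (h ▸ hk))
      refine ⟨T (b j) g, by rw [hcard3]; exact hN, ?_, ?_⟩
      · intro x hxO hxne
        have hxj : x ≠ b j := hxne j (Finset.mem_insert_self j S)
        rw [hSlope x hxO hxj,
          hgF x hxO (fun k hk => hxne k (Finset.mem_insert_of_mem hk)),
          hgF (b j) hbjO (fun k hk => hjne k hk)]
        exact (F_step hj hxne hjne).symm
      · intro m hm1 hm2 x hxI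
        rw [hcard3] at hm2
        have hxO : x ∈ Set.Ioo u v := hIcc hxI
        rw [hForm m hm2 x hxO, hcard]
        rw [show S.card + 1 + m + 1 = S.card + (m + 1) + 1 from by omega]
        rw [← intervalIntegral.integral_const_mul]
        apply intervalIntegral.intervalIntegral_pos_of_pos_on
        · apply ContinuousOn.intervalIntegrable
          rw [Set.uIcc_of_le zero_le_one]
          exact continuousOn_const.mul (contOn_aux (hgN.1 (m+1) (by omega)) hbjO hxO m)
        · intro t ht
          have htI : t ∈ Set.Icc (0:ℝ) 1 := ⟨ht.1.le, ht.2.le⟩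
          have hpt : b j + t * (x - b j) ∈ Set.Icc an a0 := seg_mem_Icc hbjI hxI htI
          have hg := hgP (m+1) (by omega) (by omega) _ hpt
          have htm : 0 < t ^ m := pow_pos ht.1 m
          calc (0:ℝ) < t ^ m * ((-1)^(S.card + (m+1) + 1)
                * iteratedDeriv (m+1) g (b j + t * (x - b j))) := mul_pos htm hg
            _ = (-1)^(S.card + (m+1) + 1)
                * (t ^ m * iteratedDeriv (m+1) g (b j + t * (x - b j))) := by ring
        · exact zero_lt_one
  obtain ⟨g, hgN, hgF, hgP⟩ := main J (le_refl J)
  refine ⟨g, ?_, ?_, ?_⟩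
  · intro x hx hxne
    exact hgF x (hIcc hx) hxne
  · exact (contDiffOn_of_nice hgN).mono hIcc
  · intro m hm x hx
    rw [idw_eq_of_nice h1 hIcc hgN m hm x hx]
    have hcard1 : 1 ≤ J.card := Finset.card_pos.2 hJne
    have h := hgP m (by omega) hm x hx
    have h2 : (-1:ℝ)^(J.card + m) * iteratedDeriv m g x
        = -((-1)^(J.card + m + 1) * iteratedDeriv m g x) := by
      rw [pow_succ]; ring
    rw [h2]
    linarith
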